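/- Let G be a graph without isolated vertices and let weights satisfy 0 ≤ 2·w_v ≤ w_e. Then for any minimum vertex cover S_vc of G, the mixed set (S_vc, ∅) is a minimum-weight mixed dominating set of G; in particular, the minimum weight of a mixed dominating set of G equals w_v·τ(G). -/

import Mathlib

/-- Mixed dominating set, see paper. -/
def IsMixedDomSet {V : Type*} (G : SimpleGraph V) (VD : Finset V) (ED : Finset (Sym2 V)) :
    Prop :=
  (∀ e ∈ ED, e ∈ G.edgeSet) ∧
  (∀ v : V, v ∉ VD → (∃ e ∈ ED, v ∈ e) ∨ ∃ u ∈ VD, G.Adj v u) ∧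
  (∀ e ∈ G.edgeSet, e ∉ ED → ∃ v ∈ e, v ∈ VD ∨ ∃ f ∈ ED, v ∈ f)

/-- A vertex cover contains at least one endpoint of every edge. -/
def IsVertexCover {V : Type*} (G : SimpleGraph V) (C : Finset V) : Prop :=
  ∀ ⦃u w : V⦄, G.Adj u w → u ∈ C ∨ w ∈ C

/-- Let `G` have no isolated vertices and `0 ≤ 2 w_v ≤ w_e`. Then any minimum vertex cover
`S_vc` yields a minimum-weight mixed dominating set `(S_vc, ∅)`; in particular the minimum
weight of a mixed dominating set equals `w_v * τ(G)` (here `|S_vc| = τ(G)`). -/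
theorem minVertexCover_is_optimal_mixedDomSet {V : Type*} (G : SimpleGraph V)
    (hiso : ∀ v : V, ∃ u : V, G.Adj v u)
    (wv we : ℝ) (hwv : 0 ≤ wv) (hwe : 2 * wv ≤ we)
    (Svc : Finset V) (hSvc : IsVertexCover G Svc)
    (hSvcmin : ∀ C : Finset V, IsVertexCover G C → Svc.card ≤ C.card) :
    IsMixedDomSet G Svc ∅ ∧
    (∀ (VD : Finset V) (ED : Finset (Sym2 V)), IsMixedDomSet G VD ED →
      wv * Svc.card + we * (∅ : Finset (Sym2 V)).card ≤ wv * VD.card + we * ED.card) ∧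
    wv * Svc.card + we * (∅ : Finset (Sym2 V)).card = wv * Svc.card := by
  classical
  refine ⟨⟨by simp, ?_, ?_⟩, ?_, by simp⟩
  · intro v hv
    right
    obtain ⟨u, hu⟩ := hiso v
    rcases hSvc hu with h | h
    · exact absurd h hv
    · exact ⟨u, h, hu⟩
  · intro e he _
    induction e using Sym2.ind with
    | _ u w =>
      rcases hSvc (G.mem_edgeSet.mp he) with h | h
      · exact ⟨u, Sym2.mem_mk_left _ _, Or.inl h⟩
      · exact ⟨w, Sym2.mem_mk_right _ _, Or.inl h⟩
  · intro VD ED ⟨hE, _, hcov⟩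
    set C : Finset V := VD ∪ ED.biUnion (fun e => {(Quot.out e).1, (Quot.out e).2}) with hC
    have hmem : ∀ (e : Sym2 V), e ∈ ED → ∀ v, v ∈ e →
        v ∈ ED.biUnion (fun e => {(Quot.out e).1, (Quot.out e).2}) := by
      intro e heED v hv
      refine Finset.mem_biUnion.mpr ⟨e, heED, ?_⟩
      have hv2 : v ∈ Sym2.mk (Quot.out e).1 (Quot.out e).2 := by
        rw [Sym2.mk, e.out_eq]
        exact hv
      rcases Sym2.mem_iff.mp hv2 with rfl | rfl
      · exact Finset.mem_insert_self _ _
      · exact Finset.mem_insert_of_mem (Finset.mem_singleton_self _)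
    have hCvc : IsVertexCover G C := by
      intro u w huw
      by_cases hED : Sym2.mk u w ∈ ED
      · exact Or.inl (Finset.mem_union_right _
          (hmem _ hED u (Sym2.mem_mk_left _ _)))
      · obtain ⟨v, hv, hv'⟩ := hcov _ (G.mem_edgeSet.mpr huw) hED
        rcases Sym2.mem_iff.mp hv with rfl | rfl
        · left
          rcases hv' with h | ⟨f, hf, hvf⟩
          · exact Finset.mem_union_left _ h
          · exact Finset.mem_union_right _ (hmem f hf _ hvf)
        · right
          rcases hv' with h | ⟨f, hf, hvf⟩
          · exact Finset.mem_union_left _ h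
          · exact Finset.mem_union_right _ (hmem f hf _ hvf)
    have hcard : (Svc.card : ℝ) ≤ VD.card + 2 * ED.card := by
      have h1 : Svc.card ≤ C.card := hSvcmin C hCvc
      have h2 : C.card ≤ VD.card + ED.card * 2 := by
        refine le_trans (Finset.card_union_le _ _) ?_
        gcongr
        exact Finset.card_biUnion_le_card_mul _ _ 2
          (fun e _ => Finset.card_insert_le _ _ |>.trans (by simp))
      have := h1.trans h2
      calc (Svc.card : ℝ) ≤ (VD.card + ED.card * 2 : ℕ) := by exact_mod_cast this
        _ = VD.card + 2 * ED.card := by push_cast; ring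
    have hEDnn : (0 : ℝ) ≤ (ED.card : ℝ) := by positivity
    simp only [Finset.card_empty, Nat.cast_zero, mul_zero, add_zero]
    calc wv * Svc.card ≤ wv * (VD.card + 2 * ED.card) := by
          exact mul_le_mul_of_nonneg_left hcard hwv
      _ = wv * VD.card + (2 * wv) * ED.card := by ring
      _ ≤ wv * VD.card + we * ED.card := by
          gcongr
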